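/- In the Šarkovskiĭ order on positive natural numbers, the set of elements that are not powers of 2, ordered by ≺, has order type ω² (it is a well-order isomorphic to ω·ω), while the set of powers of 2 ordered by ≺ has order type ω*; in particular the whole Šarkovskiĭ order has a greatest element, namely 1. -/

import Mathlib

/-- The odd part of `n`: the `m` in the unique decomposition `n = 2^a · m`
with `m` odd (for `n > 0`). -/
def oddPart (n : ℕ) : ℕ := n / 2 ^ padicValNat 2 n

/-- The Šarkovskiĭ-type order on positive naturals. -/
def sharLt (n n' : ℕ) : Prop :=
  (1 < oddPart n ∧ 1 < oddPart n' ∧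
    (padicValNat 2 n < padicValNat 2 n' ∨
      (padicValNat 2 n = padicValNat 2 n' ∧ oddPart n < oddPart n'))) ∨
  (1 < oddPart n ∧ oddPart n' = 1) ∨
  (oddPart n = 1 ∧ oddPart n' = 1 ∧ padicValNat 2 n' < padicValNat 2 n)

instance : Fact (Nat.Prime 2) := ⟨Nat.prime_two⟩

lemma two_pow_mul_oddPart (n : ℕ) : 2 ^ padicValNat 2 n * oddPart n = n := by
  have := Nat.ordProj_mul_ordCompl_eq_self n 2
  simpa [oddPart, Nat.factorization_def n Nat.prime_two] using this

lemma oddPart_not_two_dvd {n : ℕ} (h : 0 < n) : ¬ 2 ∣ oddPart n := by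
  have := Nat.not_dvd_ordCompl Nat.prime_two h.ne'
  simpa [oddPart, Nat.factorization_def n Nat.prime_two] using this

lemma padicValNat_two_pow_mul {a m : ℕ} (hm : ¬ 2 ∣ m) : padicValNat 2 (2^a*m) = a := by
  have hm0 : m ≠ 0 := by rintro rfl; exact hm ⟨0, rfl⟩
  rw [padicValNat.mul (by positivity) hm0, padicValNat.prime_pow,
    padicValNat.eq_zero_of_not_dvd hm, add_zero]

lemma oddPart_two_pow_mul {a m : ℕ} (hm : ¬ 2 ∣ m) : oddPart (2^a*m) = m := by
  rw [oddPart, padicValNat_two_pow_mul hm, Nat.mul_div_cancel_left _ (by positivity)]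

/-- non-powers of 2 ≃ ℕ × ℕ -/
def npEquiv : {n : ℕ // 0 < n ∧ 1 < oddPart n} ≃ ℕ × ℕ where
  toFun x := (padicValNat 2 x.1, (oddPart x.1 - 3) / 2)
  invFun p := ⟨2 ^ p.1 * (2 * p.2 + 3), by
    have h3 : ¬ 2 ∣ (2 * p.2 + 3) := by omega
    refine ⟨by positivity, ?_⟩
    rw [oddPart_two_pow_mul h3]; omega⟩
  left_inv x := by
    obtain ⟨n, hn, h1⟩ := x
    have hodd : ¬ 2 ∣ oddPart n := oddPart_not_two_dvd hn
    have : 2 * ((oddPart n - 3) / 2) + 3 = oddPart n := by omega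
    simp only [Subtype.mk.injEq, this]
    exact two_pow_mul_oddPart n
  right_inv p := by
    have h3 : ¬ 2 ∣ (2 * p.2 + 3) := by omega
    simp [padicValNat_two_pow_mul h3, oddPart_two_pow_mul h3]

lemma npEquiv_rel (x y : {n : ℕ // 0 < n ∧ 1 < oddPart n}) :
    sharLt x.1 y.1 ↔ Prod.Lex (· < ·) (· < ·) (npEquiv x) (npEquiv y) := by
  obtain ⟨n, hn, h1⟩ := x; obtain ⟨n', hn', h1'⟩ := y
  have ho : ¬ 2 ∣ oddPart n := oddPart_not_two_dvd hn
  have ho' : ¬ 2 ∣ oddPart n' := oddPart_not_two_dvd hn'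
  simp only [npEquiv, Equiv.coe_fn_mk, Prod.lex_iff, sharLt]
  omega

set_option linter.deprecated false in
noncomputable def npIso.{u} :
    (fun x y : {n : ℕ // 0 < n ∧ 1 < oddPart n} => sharLt x.1 y.1) ≃r
      ((· < ·) : {o : Ordinal.{u} // o < Ordinal.omega0 ^ 2} →
        {o : Ordinal.{u} // o < Ordinal.omega0 ^ 2} → Prop) := by
  have h1 : Ordinal.type (Prod.Lex ((· < ·) : ℕ → ℕ → Prop) ((· < ·) : ℕ → ℕ → Prop)) =
      Ordinal.omega0 ^ 2 := by
    rw [Ordinal.type_prod_lex, Ordinal.type_nat_lt, sq]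
  have key : Nonempty ((Prod.Lex ((· < ·) : ℕ → ℕ → Prop) ((· < ·) : ℕ → ℕ → Prop)) ≃r
      (Subrel (· < ·) (fun o : Ordinal.{u} => o < Ordinal.omega0 ^ 2))) := by
    rw [← Ordinal.lift_type_eq.{0, u + 1, u + 1}]
    rw [h1, Ordinal.type_subrel, Ordinal.typein_ordinal, Ordinal.lift_lift]
    simp [sq, Ordinal.lift_mul, Ordinal.lift_omega0]
  have j := key.some
  exact RelIso.trans ⟨npEquiv, fun {a b} => (npEquiv_rel a b).symm⟩ j

/-- powers of 2 ≃ ℕ -/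
def p2Equiv : {n : ℕ // 0 < n ∧ oddPart n = 1} ≃ ℕ where
  toFun x := padicValNat 2 x.1
  invFun a := ⟨2 ^ a, by positivity, by
    simpa using oddPart_two_pow_mul (a := a) (m := 1) (by norm_num)⟩
  left_inv x := by
    obtain ⟨n, hn, h1⟩ := x
    have h := two_pow_mul_oddPart n
    rw [h1, mul_one] at h
    simp [h]
  right_inv a := by
    simpa using padicValNat_two_pow_mul (a := a) (m := 1) (by norm_num)

def p2Iso :
    (fun x y : {n : ℕ // 0 < n ∧ oddPart n = 1} => sharLt x.1 y.1) ≃r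
      (fun a b : ℕ => b < a) := by
  refine ⟨p2Equiv, fun {x y} => ?_⟩
  obtain ⟨n, hn, h1⟩ := x; obtain ⟨n', hn', h1'⟩ := y
  simp [p2Equiv, sharLt, h1, h1']

/-- In the Šarkovskiĭ order: the non-powers of 2 (positive `n` with odd part
`> 1`) have order type ω², the powers of 2 (positive `n` with odd part `1`)
have order type ω*, and `1` is the greatest element. -/
theorem stmt_19 :
    Nonempty ((fun x y : {n : ℕ // 0 < n ∧ 1 < oddPart n} => sharLt x.1 y.1) ≃r
      ((· < ·) : {o : Ordinal // o < Ordinal.omega0 ^ 2} →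
        {o : Ordinal // o < Ordinal.omega0 ^ 2} → Prop)) ∧
    Nonempty ((fun x y : {n : ℕ // 0 < n ∧ oddPart n = 1} => sharLt x.1 y.1) ≃r
      (fun a b : ℕ => b < a)) ∧
    (∀ n : ℕ, 0 < n → n ≠ 1 → sharLt n 1) := by
  refine ⟨⟨npIso⟩, ⟨p2Iso⟩, fun n hn hne => ?_⟩
  have hop1 : oddPart 1 = 1 := by
    simpa using oddPart_two_pow_mul (a := 0) (m := 1) (by norm_num)
  have hpv1 : padicValNat 2 1 = 0 := padicValNat.one
  have h := two_pow_mul_oddPart n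
  have ho : ¬ 2 ∣ oddPart n := oddPart_not_two_dvd hn
  rcases lt_or_ge 1 (oddPart n) with h1 | h1
  · exact Or.inr (Or.inl ⟨h1, hop1⟩)
  · have hop : oddPart n = 1 := by
      have : oddPart n ≠ 0 := by rintro h0; rw [h0, mul_zero] at h; omega
      omega
    refine Or.inr (Or.inr ⟨hop, hop1, ?_⟩)
    rw [hpv1]
    rw [hop, mul_one] at h
    have hne0 : padicValNat 2 n ≠ 0 := by
      intro h0
      rw [h0, pow_zero] at h
      exact hne h.symm
    exact Nat.pos_of_ne_zero hne0
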